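/- Let ν>0, σ²>0, r∈(0,1) and μ₁,μ₂∈ℝ, and let f_J(y₁,y₂) = ((1−r)^{ν/2+1}/(πνσ²)) · (Γ((ν+1)/2)/Γ(ν/2))² · ω(y₁,y₂)^{(ν+1)/2} · ₂F₁((ν+1)/2, (ν+1)/2; ν/2; r·ω(y₁,y₂)) denote the pairwise joint density of the NSVt model. Then for every y₂∈ℝ, ∫_ℝ f_J(y₁,y₂) dy₁ = t_{ν,μ₂,σ}(y₂); that is, the marginals of the pairwise joint density are the Student-t density with ν degrees of freedom, location μ₂ and scale σ. -/

import Mathlib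

open MeasureTheory Real Set

/-- Modified Bessel function of the first kind (series form). -/
noncomputable def besselI (α x : ℝ) : ℝ :=
  ∑' k : ℕ, (x / 2) ^ (2 * (k : ℝ) + α) / (Real.Gamma ((k : ℝ) + α + 1) * (Nat.factorial k : ℝ))

/-- Gamma density with rate `γ` and shape `α`. -/
noncomputable def gammaPdf (γ α z : ℝ) : ℝ :=
  γ ^ α * z ^ (α - 1) * Real.exp (-γ * z) / Real.Gamma α

/-- Kibble bivariate gamma density with parameters `φ > 0` and `r ∈ (0,1)`. -/
noncomputable def kibble (φ r z₁ z₂ : ℝ) : ℝ :=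
  φ ^ (φ + 1) / ((1 - r) * Real.Gamma φ) * (z₁ * z₂ / r) ^ ((φ - 1) / 2) *
    Real.exp (-φ * (z₁ + z₂) / (1 - r)) *
    besselI (φ - 1) (2 * φ * Real.sqrt (r * z₁ * z₂) / (1 - r))

/-- Conditional normal density of the NSVt model given latent `z`: `N(μ, σ²/z)`. -/
noncomputable def normCond (σ μ y z : ℝ) : ℝ :=
  Real.sqrt z / (Real.sqrt (2 * Real.pi) * σ) * Real.exp (-z * (y - μ) ^ 2 / (2 * σ ^ 2))

/-- Student-t density with `ν` degrees of freedom, location `μ` and scale `σ`. -/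
noncomputable def studentTPdf (ν μ σ y : ℝ) : ℝ :=
  Real.Gamma ((ν + 1) / 2) / (Real.Gamma (ν / 2) * Real.sqrt (Real.pi * ν) * σ) *
    (1 + (y - μ) ^ 2 / (ν * σ ^ 2)) ^ (-(ν + 1) / 2)

/-- Gauss hypergeometric series `₂F₁(a₁,a₂;b;x)`. -/
noncomputable def hyp2F1 (a₁ a₂ b x : ℝ) : ℝ :=
  ∑' k : ℕ, Real.Gamma ((k : ℝ) + a₁) * Real.Gamma ((k : ℝ) + a₂) * Real.Gamma b /
    (Real.Gamma a₁ * Real.Gamma a₂ * Real.Gamma ((k : ℝ) + b)) * x ^ k / (Nat.factorial k : ℝ)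

/-- Confluent hypergeometric (Kummer) series `₁F₁(a;b;x)`. -/
noncomputable def hyp1F1 (a b x : ℝ) : ℝ :=
  ∑' k : ℕ, Real.Gamma ((k : ℝ) + a) * Real.Gamma b /
    (Real.Gamma a * Real.Gamma ((k : ℝ) + b)) * x ^ k / (Nat.factorial k : ℝ)

/-- Generalized Laguerre polynomial of degree `n` with parameter `α`. -/
noncomputable def laguerreL (n : ℕ) (α x : ℝ) : ℝ :=
  ∑ i ∈ Finset.range (n + 1),
    (-1 : ℝ) ^ i * Real.Gamma ((n : ℝ) + α + 1) /
      (Real.Gamma (α + (i : ℝ) + 1) * (Nat.factorial (n - i) : ℝ) * (Nat.factorial i : ℝ)) * x ^ i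

/-- Negative binomial pmf with parameters `φ > 0` and `r ∈ (0,1)`. -/
noncomputable def nbinomPmf (φ r : ℝ) (u : ℕ) : ℝ :=
  Real.Gamma (φ + u) / (Real.Gamma φ * (Nat.factorial u : ℝ)) * (1 - r) ^ φ * r ^ u

/-- The quantity `ω(y₁,y₂)` appearing in the pairwise joint density of the NSVt model. -/
noncomputable def omegaFn (ν σ r μ₁ μ₂ y₁ y₂ : ℝ) : ℝ :=
  ((1 + (1 - r) * (y₁ - μ₁) ^ 2 / (ν * σ ^ 2)) *
    (1 + (1 - r) * (y₂ - μ₂) ^ 2 / (ν * σ ^ 2)))⁻¹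

/-- Pairwise joint density of the NSVt model (with `r = ρʲ`). -/
noncomputable def pairDensity (ν σ r μ₁ μ₂ y₁ y₂ : ℝ) : ℝ :=
  (1 - r) ^ (ν / 2 + 1) / (Real.pi * ν * σ ^ 2) *
    (Real.Gamma ((ν + 1) / 2) / Real.Gamma (ν / 2)) ^ 2 *
    omegaFn ν σ r μ₁ μ₂ y₁ y₂ ^ ((ν + 1) / 2) *
    hyp2F1 ((ν + 1) / 2) ((ν + 1) / 2) (ν / 2) (r * omegaFn ν σ r μ₁ μ₂ y₁ y₂)



section NSVtAux
open MeasureTheory Real Set Filter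

lemma integrableOn_rpow_mul_exp_neg_mul {a c : ℝ} (ha : 0 < a) (hc : 0 < c) :
    IntegrableOn (fun t : ℝ => t ^ (a - 1) * rexp (-(c * t))) (Ioi 0) := by
  have h0 : IntegrableOn (fun u : ℝ => rexp (-u) * u ^ (a - 1)) (Ioi 0) :=
    Real.GammaIntegral_convergent ha
  have h1 : IntegrableOn (fun t : ℝ => rexp (-(c * t)) * (c * t) ^ (a - 1)) (Ioi 0) := by
    have := (integrableOn_Ioi_comp_mul_left_iff (fun u : ℝ => rexp (-u) * u ^ (a - 1)) 0 hc).2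
    simpa using this (by simpa using h0)
  have h2 : IntegrableOn
      (fun t : ℝ => (c ^ (a - 1))⁻¹ * (rexp (-(c * t)) * (c * t) ^ (a - 1))) (Ioi 0) :=
    h1.const_mul (c ^ (a - 1))⁻¹
  refine h2.congr_fun (fun t ht => ?_) measurableSet_Ioi
  have htpos : (0 : ℝ) < t := ht
  beta_reduce
  rw [Real.mul_rpow hc.le htpos.le]
  field_simp [(Real.rpow_pos_of_pos hc (a - 1)).ne']

lemma integrable_one_add_sq_rpow {s : ℝ} (hs : 1 / 2 < s) :
    Integrable (fun x : ℝ => (1 + x ^ 2) ^ (-s)) := by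
  have h := integrable_rpow_neg_one_add_norm_sq (E := ℝ) (μ := volume) (r := 2 * s)
    (by simpa using by linarith)
  simp only [Real.norm_eq_abs, sq_abs] at h
  have hexp : -(2 * s) / 2 = -s := by ring
  rwa [hexp] at h

lemma ae_nonneg_Ioi {f : ℝ → ℝ} (h : ∀ t ∈ Ioi (0:ℝ), 0 ≤ f t) :
    0 ≤ᵐ[volume.restrict (Ioi (0:ℝ))] f :=
  (ae_restrict_iff' measurableSet_Ioi).2 (Eventually.of_forall h)

lemma integral_one_add_sq_rpow {s : ℝ} (hs : 1 / 2 < s) :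
    ∫ x : ℝ, (1 + x ^ 2) ^ (-s) = Real.sqrt π * Gamma (s - 1 / 2) / Gamma s := by
  have hs0 : 0 < s := by linarith
  have hs1 : 0 < s - 1 / 2 := by linarith
  have hΓ : 0 < Gamma s := Gamma_pos_of_pos hs0
  set K := ∫ x : ℝ, (1 + x ^ 2) ^ (-s) with hK
  have hKnn : 0 ≤ K := integral_nonneg fun x => rpow_nonneg (by positivity) _
  have key : ENNReal.ofReal (Gamma s * K) = ENNReal.ofReal (Real.sqrt π * Gamma (s - 1 / 2)) := by
    have hint : Integrable (fun x : ℝ => Gamma s * (1 + x ^ 2) ^ (-s)) :=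
      (integrable_one_add_sq_rpow hs).const_mul _
    have h1 : ENNReal.ofReal (Gamma s * K)
        = ∫⁻ x : ℝ, ENNReal.ofReal (Gamma s * (1 + x ^ 2) ^ (-s)) := by
      rw [hK, ← integral_const_mul]
      exact ofReal_integral_eq_lintegral_ofReal hint
        (Eventually.of_forall fun x => by positivity)
    have hpt : ∀ x : ℝ, Gamma s * (1 + x ^ 2) ^ (-s)
        = ∫ t in Ioi (0:ℝ), t ^ (s - 1) * rexp (-((1 + x ^ 2) * t)) := by
      intro x
      have hx : (0:ℝ) < 1 + x ^ 2 := by positivity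
      rw [integral_rpow_mul_exp_neg_mul_Ioi hs0 hx, one_div, Real.inv_rpow hx.le,
        ← Real.rpow_neg hx.le, mul_comm]
    have h2 : ∀ x : ℝ, ENNReal.ofReal (Gamma s * (1 + x ^ 2) ^ (-s))
        = ∫⁻ t in Ioi (0:ℝ), ENNReal.ofReal (t ^ (s - 1) * rexp (-((1 + x ^ 2) * t))) := by
      intro x
      have hx : (0:ℝ) < 1 + x ^ 2 := by positivity
      rw [hpt x]
      exact ofReal_integral_eq_lintegral_ofReal (integrableOn_rpow_mul_exp_neg_mul hs0 hx)
        (ae_nonneg_Ioi fun t ht => mul_nonneg (Real.rpow_nonneg (le_of_lt ht) _) (Real.exp_nonneg _))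
    have hmeas : AEMeasurable
        (Function.uncurry fun (x t : ℝ) => ENNReal.ofReal (t ^ (s - 1) * rexp (-((1 + x ^ 2) * t))))
        (volume.prod (volume.restrict (Ioi 0))) := by
      apply Measurable.aemeasurable
      apply Measurable.ennreal_ofReal
      fun_prop
    have hswap : (∫⁻ x : ℝ, ∫⁻ t in Ioi (0:ℝ),
          ENNReal.ofReal (t ^ (s - 1) * rexp (-((1 + x ^ 2) * t))))
        = ∫⁻ t in Ioi (0:ℝ), ∫⁻ x : ℝ,
          ENNReal.ofReal (t ^ (s - 1) * rexp (-((1 + x ^ 2) * t))) :=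
      lintegral_lintegral_swap hmeas
    have hinner : ∀ t ∈ Ioi (0:ℝ), (∫⁻ x : ℝ,
          ENNReal.ofReal (t ^ (s - 1) * rexp (-((1 + x ^ 2) * t))))
        = ENNReal.ofReal (Real.sqrt π * (t ^ (s - 1 / 2 - 1) * rexp (-(1 * t)))) := by
      intro t ht
      have ht0 : (0:ℝ) < t := ht
      have hfun : ∀ x : ℝ, t ^ (s - 1) * rexp (-((1 + x ^ 2) * t))
          = t ^ (s - 1) * rexp (-t) * rexp (-t * x ^ 2) := by
        intro x
        rw [show -((1 + x ^ 2) * t) = -t + -t * x ^ 2 by ring, Real.exp_add]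
        ring
      simp_rw [hfun]
      rw [← ofReal_integral_eq_lintegral_ofReal
        ((integrable_exp_neg_mul_sq ht0).const_mul _)
        (Eventually.of_forall fun x => by positivity)]
      rw [integral_const_mul, integral_gaussian]
      congr 1
      have h3 : Real.sqrt (π / t) = Real.sqrt π / t ^ (1/2 : ℝ) := by
        rw [Real.sqrt_div pi_pos.le, Real.sqrt_eq_rpow t]
      have h4 : t ^ (s - 1/2 - 1) = t ^ (s - 1) / t ^ (1/2 : ℝ) := by
        rw [← Real.rpow_sub ht0]; ring_nf
      rw [h3, h4, one_mul]
      have h5 : (0:ℝ) < t ^ (1/2 : ℝ) := Real.rpow_pos_of_pos ht0 _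
      field_simp
    calc ENNReal.ofReal (Gamma s * K)
        = ∫⁻ x : ℝ, ∫⁻ t in Ioi (0:ℝ),
            ENNReal.ofReal (t ^ (s - 1) * rexp (-((1 + x ^ 2) * t))) := by
          rw [h1]; exact lintegral_congr h2
      _ = ∫⁻ t in Ioi (0:ℝ), ∫⁻ x : ℝ,
            ENNReal.ofReal (t ^ (s - 1) * rexp (-((1 + x ^ 2) * t))) := hswap
      _ = ∫⁻ t in Ioi (0:ℝ),
            ENNReal.ofReal (Real.sqrt π * (t ^ (s - 1 / 2 - 1) * rexp (-(1 * t)))) :=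
          setLIntegral_congr_fun measurableSet_Ioi hinner
      _ = ENNReal.ofReal (∫ t in Ioi (0:ℝ),
            Real.sqrt π * (t ^ (s - 1 / 2 - 1) * rexp (-(1 * t)))) := by
          rw [ofReal_integral_eq_lintegral_ofReal
            ((integrableOn_rpow_mul_exp_neg_mul hs1 one_pos).const_mul _)
            (ae_nonneg_Ioi fun t ht => mul_nonneg (Real.sqrt_nonneg _)
              (mul_nonneg (Real.rpow_nonneg (le_of_lt ht) _) (Real.exp_nonneg _)))]
      _ = ENNReal.ofReal (Real.sqrt π * Gamma (s - 1 / 2)) := by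
          rw [integral_const_mul, integral_rpow_mul_exp_neg_mul_Ioi hs1 one_pos]
          norm_num
  have hreal : Gamma s * K = Real.sqrt π * Gamma (s - 1 / 2) :=
    (ENNReal.ofReal_eq_ofReal_iff (mul_nonneg hΓ.le hKnn) (by positivity)).1 key
  rw [eq_div_iff hΓ.ne']
  linarith

lemma integrable_one_add_mul_sq {s c m : ℝ} (hs : 1 / 2 < s) (hc : 0 < c) :
    Integrable (fun y : ℝ => (1 + c * (y - m) ^ 2) ^ (-s)) := by
  have h0 := integrable_one_add_sq_rpow hs
  have h1 : Integrable (fun x : ℝ => (1 + (Real.sqrt c * x) ^ 2) ^ (-s)) :=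
    h0.comp_mul_left' (Real.sqrt_pos.2 hc).ne'
  have h2 : Integrable (fun y : ℝ => (1 + (Real.sqrt c * (y - m)) ^ 2) ^ (-s)) :=
    h1.comp_sub_right m
  refine h2.congr (Eventually.of_forall fun y => ?_)
  show (1 + (Real.sqrt c * (y - m)) ^ 2) ^ (-s) = (1 + c * (y - m) ^ 2) ^ (-s)
  rw [mul_pow, Real.sq_sqrt hc.le]

lemma integral_one_add_mul_sq {s c m : ℝ} (hs : 1 / 2 < s) (hc : 0 < c) :
    ∫ y : ℝ, (1 + c * (y - m) ^ 2) ^ (-s)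
      = (Real.sqrt c)⁻¹ * (Real.sqrt π * Gamma (s - 1 / 2) / Gamma s) := by
  have hcs : (0:ℝ) < Real.sqrt c := Real.sqrt_pos.2 hc
  have hptw : ∀ y : ℝ, (1 + c * (y - m) ^ 2) ^ (-s)
      = (1 + (Real.sqrt c * (y - m)) ^ 2) ^ (-s) := by
    intro y; rw [mul_pow, Real.sq_sqrt hc.le]
  calc ∫ y : ℝ, (1 + c * (y - m) ^ 2) ^ (-s)
      = ∫ y : ℝ, (fun z : ℝ => (1 + (Real.sqrt c * z) ^ 2) ^ (-s)) (y - m) := by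
        simp_rw [hptw]
    _ = ∫ z : ℝ, (1 + (Real.sqrt c * z) ^ 2) ^ (-s) :=
        integral_sub_right_eq_self (fun z : ℝ => (1 + (Real.sqrt c * z) ^ 2) ^ (-s)) m
    _ = |(Real.sqrt c)⁻¹| • ∫ x : ℝ, (1 + x ^ 2) ^ (-s) :=
        Measure.integral_comp_mul_left (fun x : ℝ => (1 + x ^ 2) ^ (-s)) (Real.sqrt c)
    _ = (Real.sqrt c)⁻¹ * (Real.sqrt π * Gamma (s - 1 / 2) / Gamma s) := by
        rw [integral_one_add_sq_rpow hs, abs_of_pos (inv_pos.2 hcs), smul_eq_mul]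

lemma tendsto_nat_ratio (a c : ℝ) (hc : 0 < c) :
    Tendsto (fun n : ℕ => ((n:ℝ) + a) / ((n:ℝ) + c)) atTop (nhds 1) := by
  have h : ∀ n : ℕ, ((n:ℝ) + a) / ((n:ℝ) + c) = 1 + (a - c) / ((n:ℝ) + c) := by
    intro n
    have hn : ((n:ℝ) + c) ≠ 0 := by positivity
    field_simp
    ring
  simp_rw [h]
  have h2 : Tendsto (fun n : ℕ => (a - c) / ((n:ℝ) + c)) atTop (nhds 0) :=
    Tendsto.div_atTop tendsto_const_nhds
      (tendsto_atTop_add_const_right _ c tendsto_natCast_atTop_atTop)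
  simpa using tendsto_const_nhds.add h2

lemma binomial_summable {a x : ℝ} (ha : 0 < a) (hx0 : 0 ≤ x) (hx1 : x < 1) :
    Summable (fun k : ℕ => Gamma ((k:ℝ) + a) * x ^ k / (Nat.factorial k : ℝ)) := by
  rcases eq_or_lt_of_le hx0 with h0 | hxpos
  · refine summable_of_ne_finset_zero (s := {0}) fun k hk => ?_
    have hk0 : k ≠ 0 := by simpa using hk
    simp [← h0, zero_pow hk0]
  · set f := fun k : ℕ => Gamma ((k:ℝ) + a) * x ^ k / (Nat.factorial k : ℝ) with hf
    have hfpos : ∀ k, 0 < f k := fun k =>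
      div_pos (mul_pos (Gamma_pos_of_pos (add_pos_of_nonneg_of_pos (Nat.cast_nonneg k) ha))
        (pow_pos hxpos k)) (by positivity)
    refine summable_of_ratio_test_tendsto_lt_one hx1
      (Eventually.of_forall fun n => (hfpos n).ne') ?_
    have hratio : ∀ n : ℕ, ‖f (n+1)‖ / ‖f n‖ = (((n:ℝ) + a) / ((n:ℝ) + 1)) * x := by
      intro n
      have hna : (0:ℝ) < (n:ℝ) + a := add_pos_of_nonneg_of_pos (Nat.cast_nonneg n) ha
      have hΓpos : 0 < Gamma ((n:ℝ) + a) := Gamma_pos_of_pos hna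
      have hrec : Gamma ((↑(n+1):ℝ) + a) = ((n:ℝ) + a) * Gamma ((n:ℝ) + a) := by
        push_cast
        rw [show (n:ℝ) + 1 + a = ((n:ℝ) + a) + 1 by ring, Gamma_add_one hna.ne']
      rw [Real.norm_eq_abs, Real.norm_eq_abs, abs_of_pos (hfpos _), abs_of_pos (hfpos _)]
      simp only [hf, hrec, Nat.factorial_succ, pow_succ]
      have h1 : (Nat.factorial n : ℝ) ≠ 0 := by positivity
      have h2 : ((n:ℝ) + 1) ≠ 0 := by positivity
      push_cast
      field_simp
    simp_rw [hratio]
    simpa using (tendsto_nat_ratio a 1 one_pos).mul_const x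

lemma binomial_tsum {a x : ℝ} (ha : 0 < a) (hx0 : 0 ≤ x) (hx1 : x < 1) :
    ∑' k : ℕ, Gamma ((k:ℝ) + a) * x ^ k / (Nat.factorial k : ℝ)
      = Gamma a * (1 - x) ^ (-a) := by
  have h1x : (0:ℝ) < 1 - x := by linarith
  set f := fun k : ℕ => Gamma ((k:ℝ) + a) * x ^ k / (Nat.factorial k : ℝ) with hf
  have hsum := binomial_summable ha hx0 hx1
  have hfnn : ∀ k, 0 ≤ f k := fun k =>
    div_nonneg (mul_nonneg
      (Gamma_pos_of_pos (add_pos_of_nonneg_of_pos (Nat.cast_nonneg k) ha)).le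
      (pow_nonneg hx0 k)) (Nat.cast_nonneg _)
  have hexp : ∀ y : ℝ, rexp y = ∑' n : ℕ, y ^ n / (Nat.factorial n : ℝ) := by
    intro y
    rw [Real.exp_eq_exp_ℝ, NormedSpace.exp_eq_tsum_div]
  have key : ENNReal.ofReal (∑' k, f k) = ENNReal.ofReal (Gamma a * (1 - x) ^ (-a)) := by
    rw [ENNReal.ofReal_tsum_of_nonneg hfnn hsum]
    have hterm : ∀ k : ℕ, ENNReal.ofReal (f k)
        = ∫⁻ t in Ioi (0:ℝ), ENNReal.ofReal
            (rexp (-t) * t ^ ((k:ℝ) + a - 1) * (x ^ k / (Nat.factorial k : ℝ))) := by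
      intro k
      have hka : (0:ℝ) < (k:ℝ) + a := add_pos_of_nonneg_of_pos (Nat.cast_nonneg k) ha
      have hfk : f k = ∫ t in Ioi (0:ℝ),
          rexp (-t) * t ^ ((k:ℝ) + a - 1) * (x ^ k / (Nat.factorial k : ℝ)) := by
        rw [integral_mul_const, ← Real.Gamma_eq_integral hka, hf]
        simp [mul_div_assoc]
      rw [hfk]
      exact ofReal_integral_eq_lintegral_ofReal
        ((Real.GammaIntegral_convergent hka).mul_const _)
        (ae_nonneg_Ioi fun t ht => mul_nonneg
          (mul_nonneg (Real.exp_nonneg _) (Real.rpow_nonneg (le_of_lt ht) _))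
          (div_nonneg (pow_nonneg hx0 _) (Nat.cast_nonneg _)))
    simp_rw [hterm]
    rw [← lintegral_tsum (fun k => (Measurable.ennreal_ofReal (by fun_prop)).aemeasurable)]
    have hptw : ∀ t ∈ Ioi (0:ℝ),
        (∑' k : ℕ, ENNReal.ofReal
          (rexp (-t) * t ^ ((k:ℝ) + a - 1) * (x ^ k / (Nat.factorial k : ℝ))))
        = ENNReal.ofReal (t ^ (a - 1) * rexp (-((1 - x) * t))) := by
      intro t ht
      have ht0 : (0:ℝ) < t := ht
      have hper : ∀ k : ℕ, rexp (-t) * t ^ ((k:ℝ) + a - 1) * (x ^ k / (Nat.factorial k : ℝ))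
          = (rexp (-t) * t ^ (a - 1)) * ((x * t) ^ k / (Nat.factorial k : ℝ)) := by
        intro k
        have : t ^ ((k:ℝ) + a - 1) = t ^ (a - 1) * t ^ k := by
          rw [← Real.rpow_natCast t k, ← Real.rpow_add ht0]
          ring_nf
        rw [this, mul_pow]
        ring
      simp_rw [hper]
      have husum : Summable (fun k : ℕ => (rexp (-t) * t ^ (a - 1))
          * ((x * t) ^ k / (Nat.factorial k : ℝ))) :=
        (Real.summable_pow_div_factorial (x * t)).mul_left _
      have hunn : ∀ k : ℕ, 0 ≤ (rexp (-t) * t ^ (a - 1))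
          * ((x * t) ^ k / (Nat.factorial k : ℝ)) := fun k =>
        mul_nonneg (mul_nonneg (Real.exp_nonneg _) (Real.rpow_nonneg ht0.le _))
          (div_nonneg (pow_nonneg (mul_nonneg hx0 ht0.le) _) (Nat.cast_nonneg _))
      rw [← ENNReal.ofReal_tsum_of_nonneg hunn husum, tsum_mul_left, ← hexp (x * t)]
      congr 1
      rw [show -((1 - x) * t) = x * t + -t by ring, Real.exp_add]
      ring
    rw [setLIntegral_congr_fun measurableSet_Ioi hptw]
    rw [← ofReal_integral_eq_lintegral_ofReal (integrableOn_rpow_mul_exp_neg_mul ha h1x)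
      (ae_nonneg_Ioi fun t ht => mul_nonneg (Real.rpow_nonneg (le_of_lt ht) _)
        (Real.exp_nonneg _))]
    rw [integral_rpow_mul_exp_neg_mul_Ioi ha h1x, one_div, Real.inv_rpow h1x.le,
      ← Real.rpow_neg h1x.le, mul_comm]
  exact (ENNReal.ofReal_eq_ofReal_iff (tsum_nonneg hfnn)
    (mul_nonneg (Gamma_pos_of_pos ha).le (Real.rpow_nonneg h1x.le _))).1 key

end NSVtAux

open Filter in
set_option maxHeartbeats 1000000 in
theorem pair_density_marginal (ν σ r μ₁ μ₂ : ℝ) (hν : 0 < ν) (hσ : 0 < σ)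
    (hr : r ∈ Set.Ioo (0 : ℝ) 1) (y₂ : ℝ) :
    (∫ y₁ : ℝ, pairDensity ν σ r μ₁ μ₂ y₁ y₂) = studentTPdf ν μ₂ σ y₂ := by
  obtain ⟨hr0, hr1⟩ := hr
  have h1r : (0:ℝ) < 1 - r := by linarith
  set a : ℝ := (ν + 1) / 2 with ha_def
  set b : ℝ := ν / 2 with hb_def
  have ha : (1:ℝ)/2 < a := by rw [ha_def]; linarith
  have ha0 : 0 < a := by linarith
  have hb0 : 0 < b := by rw [hb_def]; linarith
  have hab : a = b + 1/2 := by rw [ha_def, hb_def]; ring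
  have hΓa : 0 < Gamma a := Gamma_pos_of_pos ha0
  have hΓb : 0 < Gamma b := Gamma_pos_of_pos hb0
  set c : ℝ := (1 - r) / (ν * σ ^ 2) with hc_def
  have hc : 0 < c := by rw [hc_def]; positivity
  set Q : ℝ := (y₂ - μ₂) ^ 2 / (ν * σ ^ 2) with hQ_def
  have hQ0 : 0 ≤ Q := by rw [hQ_def]; positivity
  set A₂ : ℝ := (1 - r) * (y₂ - μ₂) ^ 2 / (ν * σ ^ 2) with hA2_def
  have hA2Q : A₂ = (1 - r) * Q := by rw [hA2_def, hQ_def]; ring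
  have hA20 : 0 ≤ A₂ := by rw [hA2Q]; positivity
  have h1A2 : (0:ℝ) < 1 + A₂ := by linarith
  set x : ℝ := r / (1 + A₂) with hx_def
  have hx0 : 0 ≤ x := by rw [hx_def]; positivity
  have hx1 : x < 1 := by
    rw [hx_def, div_lt_one h1A2]; linarith
  clear_value a b c Q A₂ x
  -- constants
  set C : ℝ := (1 - r) ^ (b + 1) / (Real.pi * ν * σ ^ 2) * (Gamma a / Gamma b) ^ 2 with hC_def
  have hC0 : 0 < C := by rw [hC_def]; positivity
  set D : ℕ → ℝ := fun k => C * (Gamma ((k:ℝ) + a) ^ 2 * Gamma b /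
      (Gamma a ^ 2 * Gamma ((k:ℝ) + b))) * r ^ k / (Nat.factorial k : ℝ) *
      (1 + A₂) ^ (-(a + (k:ℝ))) with hD_def
  have hka : ∀ k : ℕ, (0:ℝ) < (k:ℝ) + a := fun k => add_pos_of_nonneg_of_pos (Nat.cast_nonneg k) ha0
  have hkb : ∀ k : ℕ, (0:ℝ) < (k:ℝ) + b := fun k => add_pos_of_nonneg_of_pos (Nat.cast_nonneg k) hb0
  have hD0 : ∀ k, 0 < D k := by
    intro k
    rw [hD_def]
    have := Gamma_pos_of_pos (hka k); have := Gamma_pos_of_pos (hkb k)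
    have : (0:ℝ) < (1 + A₂) ^ (-(a + (k:ℝ))) := Real.rpow_pos_of_pos h1A2 _
    positivity
  set g : ℕ → ℝ → ℝ := fun k y => D k * (1 + c * (y - μ₁) ^ 2) ^ (-(a + (k:ℝ))) with hg_def
  -- base positivity
  clear_value C D g
  have hbase : ∀ y : ℝ, (0:ℝ) < 1 + c * (y - μ₁) ^ 2 := fun y => by positivity
  -- Step E1 : pointwise expansion
  have hE1 : ∀ y : ℝ, pairDensity ν σ r μ₁ μ₂ y y₂ = ∑' k, g k y := by
    intro y
    have hP1 : (0:ℝ) < 1 + (1 - r) * (y - μ₁) ^ 2 / (ν * σ ^ 2) := by positivity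
    have hcP1 : 1 + (1 - r) * (y - μ₁) ^ 2 / (ν * σ ^ 2) = 1 + c * (y - μ₁) ^ 2 := by
      rw [hc_def]; ring
    have hω_eq : omegaFn ν σ r μ₁ μ₂ y y₂ = ((1 + c * (y - μ₁) ^ 2) * (1 + A₂))⁻¹ := by
      rw [omegaFn, hcP1, ← hA2_def]
    have hω0 : (0:ℝ) < omegaFn ν σ r μ₁ μ₂ y y₂ := by
      rw [hω_eq]
      exact inv_pos.2 (mul_pos (hbase y) h1A2)
    have hωpow : ∀ s : ℝ, omegaFn ν σ r μ₁ μ₂ y y₂ ^ s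
        = (1 + c * (y - μ₁) ^ 2) ^ (-s) * (1 + A₂) ^ (-s) := by
      intro s
      rw [hω_eq, Real.inv_rpow (mul_nonneg (hbase y).le h1A2.le),
        Real.mul_rpow (hbase y).le h1A2.le, mul_inv,
        ← Real.rpow_neg (hbase y).le, ← Real.rpow_neg h1A2.le]
    rw [pairDensity, hyp2F1, ← tsum_mul_left, ← ha_def, ← hb_def]
    refine tsum_congr fun k => ?_
    have h2 : (r * omegaFn ν σ r μ₁ μ₂ y y₂) ^ k
        = r ^ k * ((1 + c * (y - μ₁) ^ 2)⁻¹) ^ k * ((1 + A₂)⁻¹) ^ k := by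
      rw [hω_eq, mul_inv, ← mul_assoc, mul_pow, mul_pow]
    have h3 : (1 + c * (y - μ₁) ^ 2) ^ (-(a + (k:ℝ)))
        = (1 + c * (y - μ₁) ^ 2) ^ (-a) * ((1 + c * (y - μ₁) ^ 2)⁻¹) ^ k := by
      rw [show -(a + (k:ℝ)) = -a + -(k:ℝ) by ring, Real.rpow_add (hbase y),
        Real.rpow_neg (hbase y).le (k:ℝ), Real.rpow_natCast, inv_pow]
    have h4 : (1 + A₂) ^ (-(a + (k:ℝ))) = (1 + A₂) ^ (-a) * ((1 + A₂)⁻¹) ^ k := by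
      rw [show -(a + (k:ℝ)) = -a + -(k:ℝ) by ring, Real.rpow_add h1A2,
        Real.rpow_neg h1A2.le (k:ℝ), Real.rpow_natCast, inv_pow]
    simp only [hg_def, hD_def, hC_def]
    rw [hωpow a, h2, h3, h4]
    ring
  simp only [hE1]
  -- measurability and integrability
  have hcont : ∀ k : ℕ, Continuous (g k) := by
    intro k
    rw [hg_def]
    apply continuous_const.mul
    apply Continuous.rpow_const
    · fun_prop
    · exact fun yy => Or.inl (hbase yy).ne'
  have hsk : ∀ k : ℕ, (1:ℝ)/2 < a + (k:ℝ) := by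
    intro k
    have : (0:ℝ) ≤ (k:ℝ) := Nat.cast_nonneg k
    linarith
  have hint : ∀ k : ℕ, Integrable (g k) := by
    intro k
    rw [hg_def]
    exact (integrable_one_add_mul_sq (hsk k) hc).const_mul (D k)
  have hg0 : ∀ (k : ℕ) (y : ℝ), 0 ≤ g k y := by
    intro k y
    rw [hg_def]
    exact mul_nonneg (hD0 k).le (Real.rpow_nonneg (hbase y).le _)
  -- values of the integrals
  have hval : ∀ k : ℕ, (∫ y : ℝ, g k y)
      = D k * ((Real.sqrt c)⁻¹ * (Real.sqrt π * Gamma ((k:ℝ) + b) / Gamma ((k:ℝ) + a))) := by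
    intro k
    simp only [hg_def]
    rw [integral_const_mul, integral_one_add_mul_sq (hsk k) hc]
    rw [show a + (k:ℝ) - 1/2 = (k:ℝ) + b by rw [hab]; ring,
      show a + (k:ℝ) = (k:ℝ) + a by ring]
  set E : ℝ := C * Gamma b / Gamma a ^ 2 * (Real.sqrt c)⁻¹ * Real.sqrt π * (1 + A₂) ^ (-a)
    with hE_def
  have hterm : ∀ k : ℕ,
      D k * ((Real.sqrt c)⁻¹ * (Real.sqrt π * Gamma ((k:ℝ) + b) / Gamma ((k:ℝ) + a)))
      = E * (Gamma ((k:ℝ) + a) * x ^ k / (Nat.factorial k : ℝ)) := by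
    intro k
    have hΓka := Gamma_pos_of_pos (hka k)
    have hΓkb := Gamma_pos_of_pos (hkb k)
    have h4 : (1 + A₂) ^ (-(a + (k:ℝ))) = (1 + A₂) ^ (-a) * ((1 + A₂)⁻¹) ^ k := by
      rw [show -(a + (k:ℝ)) = -a + -(k:ℝ) by ring, Real.rpow_add h1A2,
        Real.rpow_neg h1A2.le (k:ℝ), Real.rpow_natCast, inv_pow]
    have hxp : x ^ k = r ^ k * ((1 + A₂)⁻¹) ^ k := by
      rw [hx_def, div_eq_mul_inv, mul_pow]
    have hfact : (0:ℝ) < (Nat.factorial k : ℝ) := by positivity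
    rw [hD_def]
    simp only
    rw [h4, hxp]
    have hw : ((1 + A₂) ^ (-a)) ≠ 0 := (Real.rpow_pos_of_pos h1A2 (-a)).ne'
    have hsc : Real.sqrt c ≠ 0 := (Real.sqrt_pos.2 hc).ne'
    have e1 : Gamma a * (Gamma a)⁻¹ = 1 := mul_inv_cancel₀ hΓa.ne'
    have e2 : Real.sqrt c * (Real.sqrt c)⁻¹ = 1 := mul_inv_cancel₀ hsc
    field_simp [hΓa.ne', hΓka.ne', hΓkb.ne', hfact.ne', hsc, hw]
    rw [hE_def]
    field_simp
  -- finiteness for integral_tsum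
  have htermsum : Summable (fun k : ℕ =>
      E * (Gamma ((k:ℝ) + a) * x ^ k / (Nat.factorial k : ℝ))) :=
    (binomial_summable ha0 hx0 hx1).mul_left E
  have htermnn : ∀ k : ℕ, 0 ≤ E * (Gamma ((k:ℝ) + a) * x ^ k / (Nat.factorial k : ℝ)) := by
    intro k
    have hE0 : 0 ≤ E := by
      rw [hE_def]
      have : (0:ℝ) < (1 + A₂) ^ (-a) := Real.rpow_pos_of_pos h1A2 _
      positivity
    exact mul_nonneg hE0 (div_nonneg (mul_nonneg (Gamma_pos_of_pos (hka k)).le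
      (pow_nonneg hx0 k)) (Nat.cast_nonneg _))
  have hfin : (∑' k : ℕ, ∫⁻ y : ℝ, ↑‖g k y‖₊) ≠ ⊤ := by
    have heq : ∀ k : ℕ, (∫⁻ y : ℝ, ↑‖g k y‖₊) = ENNReal.ofReal (∫ y : ℝ, g k y) := by
      intro k
      rw [ofReal_integral_eq_lintegral_ofReal (hint k)
        (Eventually.of_forall (hg0 k))]
      exact lintegral_congr fun y => (Real.enorm_eq_ofReal (hg0 k y)).symm ▸ rfl
    simp_rw [heq, hval, hterm]
    rw [← ENNReal.ofReal_tsum_of_nonneg htermnn htermsum]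
    exact ENNReal.ofReal_ne_top
  rw [integral_tsum (fun k => (hcont k).aestronglyMeasurable) hfin]
  simp_rw [hval, hterm]
  rw [tsum_mul_left, binomial_tsum ha0 hx0 hx1]
  -- final algebra
  have hx2 : 1 - x = ((1 - r) * (1 + Q)) * (1 + A₂)⁻¹ := by
    rw [hx_def, hA2Q]
    field_simp
    ring
  have h1Q : (0:ℝ) < 1 + Q := by linarith
  have h5 : (1 - x) ^ (-a) = (1 - r) ^ (-a) * (1 + Q) ^ (-a) * ((1 + A₂) ^ (-a))⁻¹ := by
    rw [hx2, Real.mul_rpow (by positivity) (inv_nonneg.2 h1A2.le),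
      Real.mul_rpow h1r.le h1Q.le, Real.inv_rpow h1A2.le]
  have hsπν : (0:ℝ) < Real.sqrt (π * ν) := Real.sqrt_pos.2 (by positivity)
  have h6 : (Real.sqrt c)⁻¹ = Real.sqrt ν * σ * ((1 - r) ^ ((1:ℝ)/2))⁻¹ := by
    rw [hc_def, Real.sqrt_div h1r.le, Real.sqrt_mul hν.le, Real.sqrt_sq hσ.le,
      ← Real.sqrt_eq_rpow]
    field_simp
  have h10 : Real.sqrt π * Real.sqrt ν = Real.sqrt (π * ν) :=
    (Real.sqrt_mul pi_pos.le ν).symm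
  have h11 : π * ν = Real.sqrt (π * ν) ^ 2 := (Real.sq_sqrt (by positivity)).symm
  have h9 : (1 - r) ^ (b + 1) * ((1 - r) ^ (-a) * (((1 - r) ^ ((1:ℝ)/2))⁻¹)) = 1 := by
    rw [← Real.rpow_neg h1r.le ((1:ℝ)/2), ← Real.rpow_add h1r, ← Real.rpow_add h1r,
      show b + 1 + (-a + -(1/2 : ℝ)) = 0 by rw [ha_def, hb_def]; ring, Real.rpow_zero]
  rw [studentTPdf, ← hQ_def, ← ha_def, ← hb_def, hE_def, hC_def, h5, h6]
  rw [show -(ν+1)/2 = -a by rw [ha_def]; ring]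
  have hpow2 : (0:ℝ) < (1 + A₂) ^ (-a) := Real.rpow_pos_of_pos h1A2 _
  have hpowQ : (0:ℝ) < (1 + Q) ^ (-a) := Real.rpow_pos_of_pos h1Q _
  have hsπ : (0:ℝ) < Real.sqrt π := Real.sqrt_pos.2 pi_pos
  have hsν : (0:ℝ) < Real.sqrt ν := Real.sqrt_pos.2 hν
  have hr12 : (0:ℝ) < (1 - r) ^ ((1:ℝ)/2) := Real.rpow_pos_of_pos h1r _
  have hr1a : (0:ℝ) < (1 - r) ^ (b + 1) := Real.rpow_pos_of_pos h1r _
  have hr1na : (0:ℝ) < (1 - r) ^ (-a) := Real.rpow_pos_of_pos h1r _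
  -- abstract all special-function atoms
  set w : ℝ := (1 + A₂) ^ (-a) with hw_def
  set u : ℝ := (1 + Q) ^ (-a) with hu_def
  set e1 : ℝ := (1 - r) ^ (b + 1) with he1_def
  set e2 : ℝ := (1 - r) ^ (-a) with he2_def
  set e3 : ℝ := (1 - r) ^ ((1:ℝ)/2) with he3_def
  set P : ℝ := Real.sqrt π with hP_def
  set N : ℝ := Real.sqrt ν with hN_def
  set S : ℝ := Real.sqrt (π * ν) with hS_def
  set GA : ℝ := Gamma a with hGA_def
  set GB : ℝ := Gamma b with hGB_def
  clear_value w u e1 e2 e3 P N S GA GB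
  have h9' : e1 * e2 = e3 := by
    have h3ne : e3 ≠ 0 := hr12.ne'
    field_simp at h9
    linarith [h9]
  have hS2 : π * ν = S ^ 2 := h11
  have hPN : P * N = S := h10
  rw [hS2, ← hPN, ← h9']
  have hu0 : u ≠ 0 := hpowQ.ne'
  have hw0 : w ≠ 0 := hpow2.ne'
  have hP0 : P ≠ 0 := hsπ.ne'
  have hN0 : N ≠ 0 := hsν.ne'
  have hσ0 : σ ≠ 0 := hσ.ne'
  have hGA0 : GA ≠ 0 := hΓa.ne'
  have hGB0 : GB ≠ 0 := hΓb.ne'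
  have he10 : e1 ≠ 0 := hr1a.ne'
  have he20 : e2 ≠ 0 := hr1na.ne'
  field_simp
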